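/- A matrix M ∈ ℝ^{n×n} is a P-matrix if and only if for all nonnegative diagonal matrices F₀, F₁ ∈ ℝ^{n×n} with F₀ + F₁ having all diagonal entries positive, the matrix M·F₀ + F₁ is nonsingular. -/

import Mathlib

open Matrix

/-- A square real matrix is a `P`-matrix if all of its principal minors are positive. -/
def IsPMatrix {n : ℕ} (M : Matrix (Fin n) (Fin n) ℝ) : Prop :=
  ∀ s : Finset (Fin n), s.Nonempty →
    0 < (M.submatrix (fun i : s => (i : Fin n)) (fun i : s => (i : Fin n))).det

/-- The (unordered) singular values of a real square matrix: square roots of the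
eigenvalues of `Aᵀ * A`. -/
noncomputable def singVals {n : ℕ} (A : Matrix (Fin n) (Fin n) ℝ) : Fin n → ℝ :=
  fun i => Real.sqrt ((show (Aᵀ * A).IsHermitian from Matrix.isHermitian_conjTranspose_mul_self A).eigenvalues i)

/-- `svalsDecr A i` is the `i`-th largest singular value of `A` (so `svalsDecr A 0 = σ₁`). -/
noncomputable def svalsDecr {n : ℕ} (A : Matrix (Fin n) (Fin n) ℝ) : Fin n → ℝ :=
  fun i => singVals A (Tuple.sort (singVals A) (Fin.rev i))

/-- The maximal singular value `σ₁`. -/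
noncomputable def maxSV {n : ℕ} (A : Matrix (Fin n) (Fin n) ℝ) : ℝ :=
  ⨆ i, singVals A i

/-- The minimal singular value `σₙ`. -/
noncomputable def minSV {n : ℕ} (A : Matrix (Fin n) (Fin n) ℝ) : ℝ :=
  ⨅ i, singVals A i

/-- The spectral radius of a real square matrix (as the spectral radius of its
complexification), valued in `ℝ≥0∞`. -/
noncomputable def specRad {n : ℕ} (A : Matrix (Fin n) (Fin n) ℝ) : ENNReal :=
  spectralRadius ℂ (A.map (Complex.ofReal))

namespace PMatrixAux

variable {n : ℕ}

noncomputable def pminor (M : Matrix (Fin n) (Fin n) ℝ) (s : Finset (Fin n)) : ℝ :=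
  (M.submatrix (fun i : s => (i : Fin n)) (fun i : s => (i : Fin n))).det

lemma pminor_empty (M : Matrix (Fin n) (Fin n) ℝ) : pminor M ∅ = 1 := by
  haveI : IsEmpty {x : Fin n // x ∈ (∅ : Finset (Fin n))} :=
    ⟨fun x => absurd x.2 (Finset.notMem_empty _)⟩
  exact Matrix.det_isEmpty

lemma det_padded (M : Matrix (Fin n) (Fin n) ℝ) (s : Finset (Fin n)) :
    (Matrix.of fun i j => if j ∈ s then M i j else if i = j then (1:ℝ) else 0).det
      = pminor M s := by
  classical
  rw [← Matrix.det_submatrix_equiv_self (Equiv.sumCompl (· ∈ s))]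
  have h : (Matrix.of fun i j => if j ∈ s then M i j else if i = j then (1:ℝ) else 0).submatrix
      (Equiv.sumCompl (· ∈ s)) (Equiv.sumCompl (· ∈ s)) =
      Matrix.fromBlocks
        (M.submatrix (fun i : {x // x ∈ s} => (i : Fin n)) (fun i : {x // x ∈ s} => (i : Fin n)))
        0
        (M.submatrix (fun i : {x // ¬ x ∈ s} => (i : Fin n)) (fun i : {x // x ∈ s} => (i : Fin n)))
        1 := by
    ext p q
    rcases p with p | p <;> rcases q with q | q <;>
      simp [Matrix.fromBlocks, Matrix.one_apply, Equiv.sumCompl, q.2, Subtype.ext_iff]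
    · intro h; exact absurd (h ▸ p.2) q.2
  rw [h, Matrix.det_fromBlocks_zero₁₂, Matrix.det_one, mul_one]
  rfl

lemma det_expansion (M : Matrix (Fin n) (Fin n) ℝ) (f₀ f₁ : Fin n → ℝ) :
    (M * Matrix.diagonal f₀ + Matrix.diagonal f₁).det =
      ∑ s : Finset (Fin n), (∏ i ∈ s, f₀ i) * (∏ i ∈ sᶜ, f₁ i) * pminor M s := by
  classical
  rw [← Matrix.det_transpose]
  set a : Matrix (Fin n) (Fin n) ℝ := Matrix.of fun j i => f₀ j * M i j with ha
  set b : Matrix (Fin n) (Fin n) ℝ :=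
    Matrix.of fun j i => f₁ j * (if i = j then (1:ℝ) else 0) with hb
  have hrw : (M * Matrix.diagonal f₀ + Matrix.diagonal f₁)ᵀ = a + b := by
    ext j i
    by_cases h : i = j <;>
      simp [ha, hb, Matrix.transpose_apply, Matrix.add_apply, Matrix.mul_diagonal,
        Matrix.diagonal_apply, h, mul_comm]
  rw [hrw]
  refine (MultilinearMap.map_add_univ
      (Matrix.detRowAlternating (R := ℝ) (n := Fin n)).toMultilinearMap a b).trans ?_
  refine Finset.sum_congr rfl fun s _ => ?_
  have hsp : s.piecewise a b = Matrix.of fun j i => (s.piecewise f₀ f₁ j) *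
      ((Matrix.of fun j i => if j ∈ s then M i j else if i = j then (1:ℝ) else 0) j i) := by
    ext j i
    by_cases h : j ∈ s <;> simp [ha, hb, Finset.piecewise, h]
  show Matrix.det _ = _
  rw [hsp, Matrix.det_mul_column]
  have hprod : (∏ j, s.piecewise f₀ f₁ j) = (∏ i ∈ s, f₀ i) * (∏ i ∈ sᶜ, f₁ i) := by
    rw [Finset.prod_piecewise]
    simp [Finset.univ_inter, Finset.compl_eq_univ_sdiff]
  rw [hprod]
  congr 1
  rw [← Matrix.det_transpose]
  rw [show (Matrix.of fun j i => if j ∈ s then M i j else if i = j then (1:ℝ) else 0)ᵀ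
      = Matrix.of fun i j => if j ∈ s then M i j else if i = j then (1:ℝ) else 0 by
    ext i j
    by_cases h : j ∈ s <;> by_cases h' : i = j <;> simp [Matrix.transpose_apply, h, h', eq_comm]]
  exact det_padded M s

end PMatrixAux

open PMatrixAux in
theorem stmt2'_aux {n : ℕ} (M : Matrix (Fin n) (Fin n) ℝ) :
    (∀ s : Finset (Fin n), s.Nonempty → 0 < pminor M s) ↔
      ∀ f₀ f₁ : Fin n → ℝ, (∀ i, 0 ≤ f₀ i) → (∀ i, 0 ≤ f₁ i) →
        (∀ i, 0 < f₀ i + f₁ i) →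
        IsUnit (M * Matrix.diagonal f₀ + Matrix.diagonal f₁) := by
  classical
  constructor
  · intro hM f₀ f₁ h0 h1 hpos
    rw [Matrix.isUnit_iff_isUnit_det, isUnit_iff_ne_zero]
    have hpminor : ∀ s : Finset (Fin n), 0 ≤ pminor M s := by
      intro s
      rcases s.eq_empty_or_nonempty with rfl | hs
      · rw [pminor_empty]; norm_num
      · exact le_of_lt (hM s hs)
    have hdet : 0 < (M * Matrix.diagonal f₀ + Matrix.diagonal f₁).det := by
      rw [det_expansion]
      refine Finset.sum_pos' (fun s _ => ?_) ?_
      · exact mul_nonneg (mul_nonneg (Finset.prod_nonneg fun i _ => h0 i)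
          (Finset.prod_nonneg fun i _ => h1 i)) (hpminor s)
      · refine ⟨Finset.univ.filter (fun i => 0 < f₀ i), Finset.mem_univ _, ?_⟩
        have hp1 : 0 < ∏ i ∈ Finset.univ.filter (fun i => 0 < f₀ i), f₀ i :=
          Finset.prod_pos fun i hi => (Finset.mem_filter.mp hi).2
        have hp2 : 0 < ∏ i ∈ (Finset.univ.filter (fun i => 0 < f₀ i))ᶜ, f₁ i := by
          refine Finset.prod_pos fun i hi => ?_
          have : ¬ 0 < f₀ i := by
            have := Finset.mem_compl.mp hi
            simpa using this
          have hf0 : f₀ i = 0 := le_antisymm (not_lt.mp this) (h0 i)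
          have := hpos i
          linarith
        have hp3 : 0 < pminor M (Finset.univ.filter (fun i => 0 < f₀ i)) := by
          rcases (Finset.univ.filter (fun i => 0 < f₀ i)).eq_empty_or_nonempty with h | h
          · rw [h, pminor_empty]; norm_num
          · exact hM _ h
        exact mul_pos (mul_pos hp1 hp2) hp3
    exact ne_of_gt hdet
  · intro H s
    induction s using Finset.strongInduction with
    | _ s ih =>
    intro hs
    set f₀ : Fin n → ℝ := fun i => if i ∈ s then 1 else 0 with hf₀
    have key : ∀ ε : ℝ,
        (M * Matrix.diagonal f₀ + Matrix.diagonal (fun i => if i ∈ s then ε else 1)).det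
        = ∑ t ∈ s.powerset, ε ^ (tᶜ ∩ s).card * pminor M t := by
      intro ε
      rw [det_expansion]
      rw [← Finset.sum_subset (Finset.subset_univ s.powerset)]
      · refine Finset.sum_congr rfl fun t ht => ?_
        have hts := Finset.mem_powerset.mp ht
        have h1 : ∏ i ∈ t, f₀ i = 1 :=
          Finset.prod_eq_one fun i hi => by simp [hf₀, hts hi]
        have h2 : (∏ i ∈ tᶜ, (fun i => if i ∈ s then ε else (1:ℝ)) i) = ε ^ (tᶜ ∩ s).card := by
          rw [Finset.prod_ite, Finset.prod_const, Finset.prod_const_one, mul_one,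
            Finset.filter_mem_eq_inter]
        rw [h1, h2, one_mul]
      · intro t _ ht
        have : ¬ t ⊆ s := fun h => ht (Finset.mem_powerset.mpr h)
        obtain ⟨i, hit, his⟩ := Finset.not_subset.mp this
        rw [Finset.prod_eq_zero hit (by simp [hf₀, his]), zero_mul, zero_mul]
    set p : ℝ → ℝ := fun ε => ∑ t ∈ s.powerset, ε ^ (tᶜ ∩ s).card * pminor M t with hp
    have hpe : ∀ ε : ℝ, p ε = ∑ t ∈ s.powerset, ε ^ (tᶜ ∩ s).card * pminor M t :=
      fun ε => rfl
    have hne : ∀ ε : ℝ, 0 ≤ ε → p ε ≠ 0 := by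
      intro ε hε
      rw [hpe, ← key ε]
      have hu := H f₀ (fun i => if i ∈ s then ε else 1)
        (fun i => by by_cases h : i ∈ s <;> simp [hf₀, h])
        (fun i => by by_cases h : i ∈ s <;> simp [h, hε])
        (fun i => by
          by_cases h : i ∈ s
          · simp only [hf₀, if_pos h]; linarith
          · simp [hf₀, h])
      rwa [Matrix.isUnit_iff_isUnit_det, isUnit_iff_ne_zero] at hu
    have hself : s ∈ s.powerset := Finset.mem_powerset.mpr (subset_refl s)
    have hcards : (sᶜ ∩ s).card = 0 := by
      rw [Finset.card_eq_zero]
      ext i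
      simp
    have h0 : p 0 = pminor M s := by
      rw [hpe, Finset.sum_eq_single s]
      · rw [hcards, pow_zero, one_mul]
      · intro t ht hts
        have htsub := Finset.mem_powerset.mp ht
        obtain ⟨i, his, hit⟩ :=
          Finset.exists_of_ssubset (Finset.ssubset_iff_subset_ne.mpr ⟨htsub, hts⟩)
        have : (tᶜ ∩ s).card ≠ 0 :=
          Finset.card_ne_zero_of_mem (Finset.mem_inter.mpr ⟨Finset.mem_compl.mpr hit, his⟩)
        rw [zero_pow this, zero_mul]
      · intro h; exact absurd hself h
    have hsne : pminor M s ≠ 0 := by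
      have := hne 0 le_rfl
      rwa [h0] at this
    rcases lt_trichotomy (pminor M s) 0 with hneg | hzero | hposm
    · exfalso
      set E : ℝ := 1 - pminor M s with hE
      have hE1 : 1 < E := by rw [hE]; linarith
      have hE0 : 0 ≤ E := by linarith
      have hpE : 0 < p E := by
        have hsplit : p E = E ^ (sᶜ ∩ s).card * pminor M s +
            ∑ t ∈ s.powerset.erase s, E ^ (tᶜ ∩ s).card * pminor M t := by
          rw [hpe, ← Finset.add_sum_erase _ _ hself]
        have hmem0 : (∅ : Finset (Fin n)) ∈ s.powerset.erase s := by
          refine Finset.mem_erase.mpr ⟨?_, Finset.mem_powerset.mpr (Finset.empty_subset s)⟩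
          exact fun h => (Finset.nonempty_iff_ne_empty.mp hs) h.symm
        have hsplit2 : ∑ t ∈ s.powerset.erase s, E ^ (tᶜ ∩ s).card * pminor M t =
            E ^ ((∅ : Finset (Fin n))ᶜ ∩ s).card * pminor M ∅ +
            ∑ t ∈ (s.powerset.erase s).erase ∅, E ^ (tᶜ ∩ s).card * pminor M t :=
          (Finset.add_sum_erase _ (fun t => E ^ (tᶜ ∩ s).card * pminor M t) hmem0).symm
        have hrest : 0 ≤ ∑ t ∈ (s.powerset.erase s).erase ∅, E ^ (tᶜ ∩ s).card * pminor M t := by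
          refine Finset.sum_nonneg fun t ht => ?_
          have ht1 := Finset.mem_erase.mp ht
          have ht2 := Finset.mem_erase.mp ht1.2
          have htsub := Finset.mem_powerset.mp ht2.2
          have htss : t ⊂ s := Finset.ssubset_iff_subset_ne.mpr ⟨htsub, ht2.1⟩
          have htne : t.Nonempty := Finset.nonempty_iff_ne_empty.mpr ht1.1
          exact mul_nonneg (pow_nonneg hE0 _) (le_of_lt (ih t htss htne))
        have hEcard : ((∅ : Finset (Fin n))ᶜ ∩ s) = s := by
          ext i; simp
        have hEpow : E ≤ E ^ ((∅ : Finset (Fin n))ᶜ ∩ s).card := by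
          refine le_self_pow₀ (le_of_lt hE1) ?_
          rw [hEcard, Finset.card_ne_zero]
          exact hs
        rw [hsplit, hsplit2, hcards, pow_zero, one_mul, pminor_empty, mul_one]
        nlinarith
      have hivt : (0:ℝ) ∈ Set.Icc (p 0) (p E) := by
        constructor
        · rw [h0]; linarith
        · linarith
      have hcont : Continuous p :=
        continuous_finset_sum _ fun t _ => (continuous_pow _).mul continuous_const
      obtain ⟨x, hx, hpx⟩ := intermediate_value_Icc hE0 hcont.continuousOn hivt
      exact hne x hx.1 hpx
    · exact absurd hzero hsne
    · exact hposm

theorem stmt2 {n : ℕ} (M : Matrix (Fin n) (Fin n) ℝ) :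
    IsPMatrix M ↔
      ∀ f₀ f₁ : Fin n → ℝ, (∀ i, 0 ≤ f₀ i) → (∀ i, 0 ≤ f₁ i) →
        (∀ i, 0 < f₀ i + f₁ i) →
        IsUnit (M * Matrix.diagonal f₀ + Matrix.diagonal f₁) :=
  stmt2'_aux M
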